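/- arXiv:1911.11732 — 2 statements merged into one kernel-verified Lean document; each statement's English description precedes it below -/
import Mathlib

section
/- The flow of the vector field W = −z²x ∂x − z²y ∂y − (x²+y²)z ∂z is complete in forward time and is given explicitly for t ≥ 0 by x_t = x/√(1+tz²κ(tf)), y_t = y/√(1+tz²κ(tf)), z_t = z/√(1+tr²κ(−tf)), where r² = x²+y², f = x²+y²−z², and κ(s) = ∫₀² e^{−su} du = (1−e^{−2s})/s (with κ(0)=2). That is, the curve t ↦ (x_t,y_t,z_t) satisfies the ODE x'_t = −z_t²x_t, y'_t = −z_t²y_t, z'_t = −(x_t²+y_t²)z_t with initial condition (x,y,z). -/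
/-- f(x,y,z) = x² + y² − z². -/
def fCas (p : ℝ × ℝ × ℝ) : ℝ := p.1 ^ 2 + p.2.1 ^ 2 - p.2.2 ^ 2

/-- The vector field W = −z²x ∂x − z²y ∂y − (x²+y²)z ∂z. -/
def Wfield (p : ℝ × ℝ × ℝ) : ℝ × ℝ × ℝ :=
  (-(p.2.2 ^ 2) * p.1, -(p.2.2 ^ 2) * p.2.1, -(p.1 ^ 2 + p.2.1 ^ 2) * p.2.2)

/-- κ(s) = ∫₀² e^{−su} du = (1 − e^{−2s})/s, with κ(0) = 2. -/
noncomputable def kap (s : ℝ) : ℝ := ∫ u in (0:ℝ)..2, Real.exp (-(s * u))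

/-- g_t = (1 + t z² κ(tf))^{−1/2}. -/
noncomputable def gfun (t : ℝ) (p : ℝ × ℝ × ℝ) : ℝ :=
  1 / Real.sqrt (1 + t * p.2.2 ^ 2 * kap (t * fCas p))

/-- ḡ_t = (1 + t r² κ(−tf))^{−1/2}. -/
noncomputable def gbar (t : ℝ) (p : ℝ × ℝ × ℝ) : ℝ :=
  1 / Real.sqrt (1 + t * (p.1 ^ 2 + p.2.1 ^ 2) * kap (-(t * fCas p)))

/-- The explicit forward flow of W: (x g_t, y g_t, z ḡ_t). -/
noncomputable def flowW (p : ℝ × ℝ × ℝ) (t : ℝ) : ℝ × ℝ × ℝ :=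
  (p.1 * gfun t p, p.2.1 * gfun t p, p.2.2 * gbar t p)

lemma kap_nonneg (s : ℝ) : 0 ≤ kap s :=
  intervalIntegral.integral_nonneg (by norm_num) (fun u _ => (Real.exp_pos _).le)

lemma kap_zero : kap 0 = 2 := by simp [kap]

lemma mul_kap (s : ℝ) : s * kap s = 1 - Real.exp (-(2*s)) := by
  rcases eq_or_ne s 0 with rfl | hs
  · simp
  · have hd : ∀ u ∈ Set.uIcc (0:ℝ) 2,
        HasDerivAt (fun u => -Real.exp (-(s*u)) / s) (Real.exp (-(s*u))) u := by
      intro u _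
      have h0 : HasDerivAt (fun u : ℝ => -(s*u)) (-s) u := by
        simpa using ((hasDerivAt_id u).const_mul s).fun_neg
      have := ((h0.exp).neg).div_const s
      refine this.congr_deriv ?_
      field_simp
    have hint : IntervalIntegrable (fun u => Real.exp (-(s*u))) MeasureTheory.volume 0 2 := by
      apply Continuous.intervalIntegrable; continuity
    have := intervalIntegral.integral_eq_sub_of_hasDerivAt hd hint
    rw [kap, this]
    field_simp
    rw [mul_zero, neg_zero, Real.exp_zero]
    ring_nf

lemma hasDerivAt_aux (c f t : ℝ) :
    HasDerivAt (fun t => 1 + t * c * kap (t*f)) (2*c*Real.exp ((-(2*f))*t)) t := by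
  rcases eq_or_ne f 0 with rfl | hf
  · have he : (fun t : ℝ => 1 + t * c * kap (t*0)) = fun s => 1 + s * (c*2) := by
      funext s; rw [mul_zero, kap_zero]; ring
    rw [he]
    have h := ((hasDerivAt_id t).mul_const (c*2)).const_add 1
    refine h.congr_deriv ?_
    norm_num
    ring
  · have he : (fun t : ℝ => 1 + t * c * kap (t*f)) =
        fun s => 1 + c/f * (1 - Real.exp ((-(2*f))*s)) := by
      funext s
      have h1 : (s*f) * kap (s*f) = 1 - Real.exp ((-(2*f))*s) := by
        rw [show (-(2*f))*s = -(2*(s*f)) by ring]; exact mul_kap _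
      field_simp
      linear_combination (norm := ring_nf) c * h1
    rw [he]
    have h0 : HasDerivAt (fun s : ℝ => (-(2*f))*s) (-(2*f)) t := by
      simpa using (hasDerivAt_id t).const_mul (-(2*f))
    have := ((h0.exp.const_sub 1).const_mul (c/f)).const_add 1
    refine this.congr_deriv ?_
    field_simp

lemma ab_key (z f t : ℝ) :
    Real.exp ((-(2*f))*t) * (1 + t * (f + z^2) * kap (t*(-f))) = 1 + t * z^2 * kap (t*f) := by
  rcases eq_or_ne f 0 with rfl | hf
  · norm_num [kap_zero]
  · have hm1 : (t*f) * kap (t*f) = 1 - Real.exp ((-(2*f))*t) := by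
      rw [show (-(2*f))*t = -(2*(t*f)) by ring]; exact mul_kap _
    have hm2 : (t*(-f)) * kap (t*(-f)) = 1 - Real.exp ((2*f)*t) := by
      rw [show (2*f)*t = -(2*(t*(-f))) by ring]; exact mul_kap _
    have h1 : t * kap (t*f) = (1 - Real.exp ((-(2*f))*t))/f := by
      field_simp; linear_combination (norm := ring_nf) hm1
    have h2 : t * kap (t*(-f)) = (Real.exp ((2*f)*t) - 1)/f := by
      field_simp; linear_combination (norm := ring_nf) -hm2
    have hEE : Real.exp ((-(2*f))*t) * Real.exp ((2*f)*t) = 1 := by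
      rw [← Real.exp_add, show (-(2*f))*t + (2*f)*t = 0 by ring, Real.exp_zero]
    have e1 : (1 + t * z^2 * kap (t*f)) = 1 + z^2 * ((1 - Real.exp ((-(2*f))*t))/f) := by
      rw [← h1]; ring_nf
    have e2 : (1 + t * (f+z^2) * kap (t*(-f))) = 1 + (f+z^2) * ((Real.exp ((2*f)*t) - 1)/f) := by
      rw [← h2]; ring_nf
    rw [e1, e2]
    field_simp
    linear_combination (norm := ring_nf) (f + z^2) * hEE

lemma comp_eq1 (x z E A B sa sb : ℝ) (hsa : sa ≠ 0) (hsb : sb ≠ 0)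
    (h2a : sa^2 = A) (h2b : sb^2 = B) (key : E * B = A) :
    -((z * sb⁻¹)^2) * (x * sa⁻¹) = x * (-(1/(2*sa) * (2*z^2*E)) / sa^2) := by
  field_simp
  linear_combination (-(z^2*x)) * h2a + (z^2*x*E) * h2b + (z^2*x) * key

lemma comp_eq3 (x y z E2 A B sa sb : ℝ) (hsa : sa ≠ 0) (hsb : sb ≠ 0)
    (h2a : sa^2 = A) (h2b : sb^2 = B) (key2 : E2 * A = B) :
    -((x*sa⁻¹)^2 + (y*sa⁻¹)^2) * (z*sb⁻¹) = z * (-(1/(2*sb) * (2*(x^2+y^2)*E2)) / sb^2) := by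
  field_simp
  linear_combination ((x^2+y^2)*z*E2) * h2a - ((x^2+y^2)*z) * h2b + ((x^2+y^2)*z) * key2

/-- The explicit formula (x g_t, y g_t, z ḡ_t) solves the ODE of W for all t ≥ 0,
with initial condition (x,y,z); in particular the forward flow is complete. -/
theorem flowW_solves_ODE (p : ℝ × ℝ × ℝ) :
    flowW p 0 = p ∧
    ∀ t : ℝ, 0 ≤ t → HasDerivAt (flowW p) (Wfield (flowW p t)) t := by
  obtain ⟨x, y, z⟩ := p
  constructor
  · simp [flowW, gfun, gbar]
  · intro t ht
    have hfc : fCas (x, y, z) = x^2 + y^2 - z^2 := rfl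
    set f : ℝ := x^2 + y^2 - z^2 with hf
    set a : ℝ → ℝ := fun s => 1 + s * z^2 * kap (s*f) with hadef
    set b : ℝ → ℝ := fun s => 1 + s * (x^2+y^2) * kap (s*(-f)) with hbdef
    have hflow_eq : flowW (x, y, z) =
        fun s => (x * (Real.sqrt (a s))⁻¹, y * (Real.sqrt (a s))⁻¹, z * (Real.sqrt (b s))⁻¹) := by
      funext s
      simp only [flowW, gfun, gbar, hfc, hadef, hbdef, one_div]
      rw [show -(s * (x^2+y^2-z^2)) = s * (-(x^2+y^2-z^2)) by ring]
    have hat : 0 < a t := by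
      have h1 := mul_nonneg (mul_nonneg ht (sq_nonneg z)) (kap_nonneg (t*f))
      simp only [hadef]; nlinarith
    have hbt : 0 < b t := by
      have h1 := mul_nonneg (mul_nonneg ht (by positivity : (0:ℝ) ≤ x^2+y^2)) (kap_nonneg (t*(-f)))
      simp only [hbdef]; nlinarith
    have hsa : 0 < Real.sqrt (a t) := Real.sqrt_pos.mpr hat
    have hsb : 0 < Real.sqrt (b t) := Real.sqrt_pos.mpr hbt
    have h2a : (Real.sqrt (a t))^2 = a t := Real.sq_sqrt hat.le
    have h2b : (Real.sqrt (b t))^2 = b t := Real.sq_sqrt hbt.le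
    have ha : HasDerivAt a (2*z^2*Real.exp ((-(2*f))*t)) t := hasDerivAt_aux (z^2) f t
    have hb : HasDerivAt b (2*(x^2+y^2)*Real.exp ((-(2*(-f)))*t)) t := hasDerivAt_aux (x^2+y^2) (-f) t
    have key1 : Real.exp ((-(2*f))*t) * b t = a t := by
      have h := ab_key z f t
      simp only [hadef, hbdef]
      rw [show x^2+y^2 = f + z^2 by rw [hf]; ring]
      exact h
    have hEE : Real.exp ((-(2*f))*t) * Real.exp ((-(2*(-f)))*t) = 1 := by
      rw [← Real.exp_add, show (-(2*f))*t + (-(2*(-f)))*t = 0 by ring, Real.exp_zero]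
    have key2 : Real.exp ((-(2*(-f)))*t) * a t = b t := by
      linear_combination b t * hEE - Real.exp ((-(2*(-f)))*t) * key1
    have hsqa : HasDerivAt (fun s => Real.sqrt (a s))
        (1/(2*Real.sqrt (a t)) * (2*z^2*Real.exp ((-(2*f))*t))) t :=
      (Real.hasDerivAt_sqrt hat.ne').comp t ha
    have hsqb : HasDerivAt (fun s => Real.sqrt (b s))
        (1/(2*Real.sqrt (b t)) * (2*(x^2+y^2)*Real.exp ((-(2*(-f)))*t))) t :=
      (Real.hasDerivAt_sqrt hbt.ne').comp t hb
    have hA := (hsqa.inv hsa.ne').const_mul x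
    have hA' := (hsqa.inv hsa.ne').const_mul y
    have hB := (hsqb.inv hsb.ne').const_mul z
    have hD := HasDerivAt.prodMk hA (HasDerivAt.prodMk hA' hB)
    rw [hflow_eq]
    refine hD.congr_deriv (Eq.symm ?_)
    simp only [Wfield]
    refine Prod.ext ?_ (Prod.ext ?_ ?_)
    · exact comp_eq1 x z _ (a t) (b t) _ _ hsa.ne' hsb.ne' h2a h2b key1
    · exact comp_eq1 y z _ (a t) (b t) _ _ hsa.ne' hsb.ne' h2a h2b key1
    · exact comp_eq3 x y z _ (a t) (b t) _ _ hsa.ne' hsb.ne' h2a h2b key2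
end

section
/- For all ε ∈ [0,1] and all s, v ≥ 0, the inequality ε·e^{−2εs}/(1+vκ(s)) ≤ 1/(1+2(v+s)) holds, where κ(s) = (1−e^{−2s})/s (with κ(0)=2). -/
/-- For all ε ∈ [0,1] and s, v ≥ 0: ε e^{−2εs}/(1 + v κ(s)) ≤ 1/(1 + 2(v+s)). -/
theorem kappa_inequality (ε : ℝ) (hε0 : 0 ≤ ε) (hε1 : ε ≤ 1)
    (s v : ℝ) (hs : 0 ≤ s) (hv : 0 ≤ v) :
    ε * Real.exp (-(2 * ε * s)) / (1 + v * kap s) ≤ 1 / (1 + 2 * (v + s)) := by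
  set E := Real.exp (-(2 * ε * s)) with hE
  have hEpos : 0 < E := Real.exp_pos _
  have hint : ∀ a b : ℝ, IntervalIntegrable (fun u => Real.exp (-(s * u))) MeasureTheory.volume a b :=
    fun a b => (Continuous.intervalIntegrable (by continuity) a b)
  -- kap s ≥ 2 ε E
  have hkap : 2 * ε * E ≤ kap s := by
    have h1 : ∫ u in (0:ℝ)..(2*ε), E ≤ ∫ u in (0:ℝ)..(2*ε), Real.exp (-(s * u)) := by
      apply intervalIntegral.integral_mono_on (by positivity)
        (intervalIntegrable_const) (hint _ _)
      intro u hu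
      rw [hE]
      apply Real.exp_le_exp.2
      simp only [neg_le_neg_iff]
      nlinarith [hu.1, hu.2, mul_nonneg hs hu.1]
    have h2 : ∫ u in (0:ℝ)..(2*ε), Real.exp (-(s * u)) ≤ kap s := by
      apply intervalIntegral.integral_mono_interval le_rfl (by positivity) (by linarith)
        _ (hint _ _)
      filter_upwards with u using (Real.exp_pos _).le
    have h3 : ∫ u in (0:ℝ)..(2*ε), E = 2 * ε * E := by
      simp [mul_comm]
    linarith
  have hkap0 : 0 ≤ kap s := le_trans (by positivity) hkap
  have hd1 : (0:ℝ) < 1 + v * kap s := by positivity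
  have hd2 : (0:ℝ) < 1 + 2 * (v + s) := by positivity
  rw [div_le_div_iff₀ hd1 hd2]
  -- need ε E (1 + 2(v+s)) ≤ 1 + v kap s
  have hexp : 1 + 2 * ε * s ≤ Real.exp (2 * ε * s) := by
    have := Real.add_one_le_exp (2 * ε * s); linarith
  have hEe : E * Real.exp (2 * ε * s) = 1 := by
    rw [hE, ← Real.exp_add]; simp
  have h1 : ε * E * (1 + 2 * s) ≤ 1 := by
    have : ε * (1 + 2 * s) ≤ Real.exp (2 * ε * s) := by nlinarith
    nlinarith
  have h2 : ε * E * (2 * v) ≤ v * kap s := by nlinarith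
  nlinarith
end
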